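/- Let {A_n} be a sequence of d_n × d_n matrices with d_n → ∞, and suppose there exists p ∈ [1,∞) such that ‖A_n‖_p / d_n^{1/p} → 0, where ‖·‖_p is the Schatten p-norm. Then {A_n} is zero-distributed in the sense of singular values: for every continuous compactly supported F : ℝ → ℂ, (1/d_n) ∑_{i=1}^{d_n} F(σ_i(A_n)) → F(0). -/

import Mathlib

noncomputable def singVals {n : ℕ} (A : Matrix (Fin n) (Fin n) ℂ) : Fin n → ℝ :=
  fun i => Real.sqrt ((Matrix.isHermitian_conjTranspose_mul_self A).eigenvalues i)

noncomputable def schattenNorm {n : ℕ} (p : ℝ) (A : Matrix (Fin n) (Fin n) ℂ) : ℝ :=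
  (∑ i, singVals A i ^ p) ^ (1 / p)

theorem stmt17 (d : ℕ → ℕ) (hd : Filter.Tendsto d Filter.atTop Filter.atTop)
    (A : (n : ℕ) → Matrix (Fin (d n)) (Fin (d n)) ℂ)
    (p : ℝ) (hp : 1 ≤ p)
    (h : Filter.Tendsto (fun n => schattenNorm p (A n) / (d n : ℝ) ^ (1 / p))
      Filter.atTop (nhds 0))
    (F : ℝ → ℂ) (hF : Continuous F) (hFsupp : HasCompactSupport F) :
    Filter.Tendsto (fun n => (1 / (d n : ℂ)) * ∑ i, F (singVals (A n) i))
      Filter.atTop (nhds (F 0)) := by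
  have hp0 : (0:ℝ) < p := lt_of_lt_of_le one_pos hp
  obtain ⟨C, hC⟩ := hFsupp.exists_bound_of_continuous hF
  set C' : ℝ := max C 1 with hC'def
  have hC'pos : (0:ℝ) < C' := lt_of_lt_of_le one_pos (le_max_right _ _)
  have hCb : ∀ x, ‖F x‖ ≤ C' := fun x => (hC x).trans (le_max_left _ _)
  have hσ : ∀ n i, 0 ≤ singVals (A n) i := fun n i => Real.sqrt_nonneg _
  set g : ℕ → ℝ := fun n => (∑ i, singVals (A n) i ^ p) / d n with hgdef
  have hgeq : ∀ n, g n = (schattenNorm p (A n) / (d n : ℝ) ^ (1/p)) ^ p := by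
    intro n
    have hS : 0 ≤ ∑ i, singVals (A n) i ^ p :=
      Finset.sum_nonneg fun i _ => Real.rpow_nonneg (hσ n i) p
    rw [schattenNorm, ← Real.div_rpow hS (Nat.cast_nonneg _),
      ← Real.rpow_mul (by positivity), one_div, inv_mul_cancel₀ hp0.ne', Real.rpow_one]
  have hg0 : Filter.Tendsto g Filter.atTop (nhds 0) := by
    have h2 := h.rpow_const (p := p) (Or.inr hp0.le)
    rw [Real.zero_rpow hp0.ne'] at h2
    exact h2.congr fun n => (hgeq n).symm
  rw [Metric.tendsto_nhds]
  intro E hE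
  obtain ⟨ε, hε0, hεF⟩ := Metric.continuousAt_iff.mp hF.continuousAt (E/2) (half_pos hE)
  have hεp : (0:ℝ) < ε ^ p := Real.rpow_pos_of_pos hε0 p
  have hbpos : (0:ℝ) < E * ε ^ p / (4 * C') := by positivity
  filter_upwards [hd.eventually_ge_atTop 1, hg0.eventually (Iio_mem_nhds hbpos)] with n hd1 hgn
  have hd'0 : (0:ℝ) < (d n : ℝ) := by exact_mod_cast Nat.lt_of_lt_of_le Nat.zero_lt_one hd1
  have hdc : (d n : ℂ) ≠ 0 := by
    simp only [ne_eq, Nat.cast_eq_zero]; omega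
  have e1 : (1 / (d n : ℂ)) * ∑ i, F (singVals (A n) i) - F 0
      = (1 / (d n : ℂ)) * ∑ i, (F (singVals (A n) i) - F 0) := by
    rw [Finset.sum_sub_distrib, Finset.sum_const, Finset.card_univ, Fintype.card_fin,
      nsmul_eq_mul]
    field_simp
  have hi : ∀ i, ‖F (singVals (A n) i) - F 0‖
      ≤ E/2 + (2*C'/ε^p) * singVals (A n) i ^ p := by
    intro i
    rcases lt_or_ge (singVals (A n) i) ε with hlt | hge
    · have h1 : dist (F (singVals (A n) i)) (F 0) < E/2 := by
        apply hεF
        rw [Real.dist_eq, sub_zero, abs_of_nonneg (hσ n i)]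
        exact hlt
      rw [dist_eq_norm] at h1
      have h2 : 0 ≤ (2*C'/ε^p) * singVals (A n) i ^ p := by
        have := Real.rpow_nonneg (hσ n i) p
        positivity
      linarith
    · have h1 : ‖F (singVals (A n) i) - F 0‖ ≤ 2 * C' := by
        calc ‖F (singVals (A n) i) - F 0‖ ≤ ‖F (singVals (A n) i)‖ + ‖F 0‖ :=
              norm_sub_le _ _
          _ ≤ 2 * C' := by have := hCb (singVals (A n) i); have := hCb 0; linarith
      have h2 : ε ^ p ≤ singVals (A n) i ^ p := Real.rpow_le_rpow hε0.le hge hp0.le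
      have h3 : 2 * C' ≤ (2*C'/ε^p) * singVals (A n) i ^ p := by
        rw [div_mul_eq_mul_div, le_div_iff₀ hεp]
        nlinarith
      linarith
  have hsum : ‖∑ i, (F (singVals (A n) i) - F 0)‖
      ≤ (d n : ℝ) * (E/2) + (2*C'/ε^p) * ∑ i, singVals (A n) i ^ p := by
    calc ‖∑ i, (F (singVals (A n) i) - F 0)‖
        ≤ ∑ i, ‖F (singVals (A n) i) - F 0‖ := norm_sum_le _ _
      _ ≤ ∑ i, (E/2 + (2*C'/ε^p) * singVals (A n) i ^ p) :=
          Finset.sum_le_sum fun i _ => hi i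
      _ = (d n : ℝ) * (E/2) + (2*C'/ε^p) * ∑ i, singVals (A n) i ^ p := by
          rw [Finset.sum_add_distrib, Finset.sum_const, Finset.card_univ, Fintype.card_fin,
            nsmul_eq_mul, ← Finset.mul_sum]
  have hnorm : dist ((1 / (d n : ℂ)) * ∑ i, F (singVals (A n) i)) (F 0)
      ≤ E/2 + (2*C'/ε^p) * g n := by
    rw [dist_eq_norm, e1, norm_mul, norm_div, norm_one, Complex.norm_natCast]
    have : 1 / (d n : ℝ) * ((d n : ℝ) * (E/2) + (2*C'/ε^p) * ∑ i, singVals (A n) i ^ p)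
        = E/2 + (2*C'/ε^p) * g n := by
      rw [hgdef]; field_simp
    rw [← this]
    apply mul_le_mul_of_nonneg_left hsum (by positivity)
  have hlast : (2*C'/ε^p) * g n < E/2 := by
    have h4 : (2*C'/ε^p) * (E * ε ^ p / (4 * C')) = E/2 := by
      field_simp; ring
    calc (2*C'/ε^p) * g n < (2*C'/ε^p) * (E * ε ^ p / (4 * C')) :=
          mul_lt_mul_of_pos_left hgn (by positivity)
      _ = E/2 := h4
  linarith [hnorm]
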